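/- Let S = (ψ, A, B) be a strategy on H_A ⊗ H_B with reduced density matrices ρ_A, ρ_B, and let ν be a probability distribution on the question set X. Define δ = dsync(S;ν) = 1 − E_{x∼ν} Σ_a ⟨ψ, (A^x_a ⊗ B^x_a)ψ⟩, δ_A = 1 − E_{x∼ν} Σ_a Tr(A^x_a ρ_A^{1/2} A^x_a ρ_A^{1/2}), and δ_B = 1 − E_{x∼ν} Σ_a Tr(B^x_a ρ_B^{1/2} B^x_a ρ_B^{1/2}) (δ_A and δ_B are the asynchronicities of the associated symmetric strategies, by Ando's formula). Then: (i) 1 − δ ≤ √(1 − δ_A)·√(1 − δ_B); (ii) δ_A ≤ 2δ; and (iii) δ_B ≤ 2δ. -/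

import Mathlib

open scoped BigOperators Kronecker ComplexOrder
open Matrix

noncomputable section

abbrev Op (n : ℕ) := Matrix (Fin n) (Fin n) ℂ

def inn {I : Type*} [Fintype I] (v w : I → ℂ) : ℂ := ∑ i, star (v i) * w i

def nrm {I : Type*} [Fintype I] (v : I → ℂ) : ℝ := Real.sqrt (inn v v).re

def IsPOVM {n m : ℕ} (A : Fin m → Op n) : Prop :=
  (∀ a, (A a).PosSemidef) ∧ (∑ a, A a) = 1

def IsPVM {n m : ℕ} (A : Fin m → Op n) : Prop :=
  (∀ a, (A a).IsHermitian ∧ A a * A a = A a) ∧ (∑ a, A a) = 1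

structure Game (q m : ℕ) where
  nu : Fin q → Fin q → ℝ
  nu_nonneg : ∀ x y, 0 ≤ nu x y
  nu_sum : (∑ x, ∑ y, nu x y) = 1
  D : Fin m → Fin m → Fin q → Fin q → Bool

structure Strategy (q m nA nB : ℕ) where
  psi : Fin nA × Fin nB → ℂ
  psi_unit : inn psi psi = 1
  A : Fin q → Fin m → Op nA
  B : Fin q → Fin m → Op nB
  A_povm : ∀ x, IsPOVM (A x)
  B_povm : ∀ y, IsPOVM (B y)

def corrRaw {q m nA nB : ℕ} (psi : Fin nA × Fin nB → ℂ)
    (A : Fin q → Fin m → Op nA) (B : Fin q → Fin m → Op nB)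
    (x y : Fin q) (a b : Fin m) : ℂ :=
  inn psi ((A x a ⊗ₖ B y b).mulVec psi)

def Strategy.corr {q m nA nB : ℕ} (S : Strategy q m nA nB) :
    Fin q → Fin q → Fin m → Fin m → ℂ :=
  corrRaw S.psi S.A S.B

def winProbRaw {q m nA nB : ℕ} (G : Game q m) (psi : Fin nA × Fin nB → ℂ)
    (A : Fin q → Fin m → Op nA) (B : Fin q → Fin m → Op nB) : ℝ :=
  ∑ x, ∑ y, G.nu x y *
    ∑ a, ∑ b, (if G.D a b x y then (1:ℝ) else 0) * (corrRaw psi A B x y a b).re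

def winProb {q m nA nB : ℕ} (G : Game q m) (S : Strategy q m nA nB) : ℝ :=
  winProbRaw G S.psi S.A S.B

def qval {q m : ℕ} (G : Game q m) : ℝ :=
  sSup {w : ℝ | ∃ (nA nB : ℕ) (S : Strategy q m nA nB), winProb G S = w}

def margA {q : ℕ} (nu : Fin q → Fin q → ℝ) (x : Fin q) : ℝ := ∑ y, nu x y
def margB {q : ℕ} (nu : Fin q → Fin q → ℝ) (y : Fin q) : ℝ := ∑ x, nu x y

def dsyncRaw {q m nA nB : ℕ} (psi : Fin nA × Fin nB → ℂ)
    (A : Fin q → Fin m → Op nA) (B : Fin q → Fin m → Op nB) (mu : Fin q → ℝ) : ℝ :=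
  1 - ∑ x, mu x * ∑ a, (corrRaw psi A B x x a a).re

def Strategy.dsync {q m nA nB : ℕ} (S : Strategy q m nA nB) (mu : Fin q → ℝ) : ℝ :=
  dsyncRaw S.psi S.A S.B mu

def Game.Symm {q m : ℕ} (G : Game q m) : Prop :=
  (∀ x y, G.nu x y = G.nu y x) ∧ ∀ a b x y, G.D a b x y = G.D b a y x

def Game.Synchronous {q m : ℕ} (G : Game q m) : Prop :=
  G.Symm ∧ (∀ x, 0 < G.nu x x) ∧ ∀ x a b, a ≠ b → G.D a b x x = false

def Game.BetaSync {q m : ℕ} (G : Game q m) (β : ℝ) : Prop :=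
  G.Synchronous ∧ ∀ x, β * ∑ y, G.nu x y ≤ G.nu x x

def Game.Perfect {q m : ℕ} (G : Game q m) : Prop :=
  ∃ (nA nB : ℕ) (S : Strategy q m nA nB), winProb G S = 1

def IsPME {q m n : ℕ} (S : Strategy q m n n) : Prop :=
  (∀ x, IsPVM (S.A x)) ∧
  ∃ U : Op n, Uᴴ * U = 1 ∧
    (∀ p, S.psi p = ((Real.sqrt n)⁻¹ : ℂ) * ∑ i, U p.1 i * U p.2 i) ∧
    (∀ x a, S.B x a = U * (Uᴴ * S.A x a * U)ᵀ * Uᴴ)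

def dilTarget {nA nB kA kB : ℕ} (psi : Fin nA × Fin nB → ℂ)
    (aux : Fin kA × Fin kB → ℂ) :
    (Fin nA × Fin kA) × (Fin nB × Fin kB) → ℂ :=
  fun p => psi (p.1.1, p.2.1) * aux (p.1.2, p.2.2)

def DilIneqs {q m nA nB tA tB kA kB : ℕ}
    (S : Strategy q m nA nB) (T : Strategy q m tA tB)
    (VA : Matrix (Fin tA × Fin kA) (Fin nA) ℂ)
    (VB : Matrix (Fin tB × Fin kB) (Fin nB) ℂ)
    (aux : Fin kA × Fin kB → ℂ) (ε : ℝ) (mu : Fin q → Fin q → ℝ) : Prop :=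
  nrm (fun p => (VA ⊗ₖ VB).mulVec S.psi p - dilTarget T.psi aux p) ≤ ε ∧
  Real.sqrt (∑ x, margA mu x * ∑ a,
    (nrm (fun p => (VA ⊗ₖ VB).mulVec ((S.A x a ⊗ₖ (1 : Op nB)).mulVec S.psi) p
      - dilTarget ((T.A x a ⊗ₖ (1 : Op tB)).mulVec T.psi) aux p)) ^ 2) ≤ ε ∧
  Real.sqrt (∑ y, margB mu y * ∑ b,
    (nrm (fun p => (VA ⊗ₖ VB).mulVec (((1 : Op nA) ⊗ₖ S.B y b).mulVec S.psi) p
      - dilTarget (((1 : Op tA) ⊗ₖ T.B y b).mulVec T.psi) aux p)) ^ 2) ≤ ε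

def LocalDilation {q m nA nB tA tB : ℕ}
    (S : Strategy q m nA nB) (T : Strategy q m tA tB) (ε : ℝ)
    (mu : Fin q → Fin q → ℝ) : Prop :=
  ∃ (kA kB : ℕ) (VA : Matrix (Fin tA × Fin kA) (Fin nA) ℂ)
    (VB : Matrix (Fin tB × Fin kB) (Fin nB) ℂ) (aux : Fin kA × Fin kB → ℂ),
    VAᴴ * VA = 1 ∧ VBᴴ * VB = 1 ∧ inn aux aux = 1 ∧ DilIneqs S T VA VB aux ε mu

def SelfTestsPME {q m tA tB : ℕ} (G : Game q m) (T : Strategy q m tA tB)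
    (κ : ℝ → ℝ) (nuh : Fin q → Fin q → ℝ) : Prop :=
  ∀ ε : ℝ, 0 ≤ ε → ∀ (n : ℕ) (S : Strategy q m n n), IsPME S →
    qval G - ε ≤ winProb G S → LocalDilation S T (κ ε) nuh

def SelfTestsAll {q m tA tB : ℕ} (G : Game q m) (T : Strategy q m tA tB)
    (κ : ℝ → ℝ) (nuh : Fin q → Fin q → ℝ) : Prop :=
  ∀ ε : ℝ, 0 ≤ ε → ∀ (nA nB : ℕ) (S : Strategy q m nA nB),
    qval G - ε ≤ winProb G S → LocalDilation S T (κ ε) nuh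

def SelfTestsClass {q m tA tB : ℕ} (G : Game q m) (T : Strategy q m tA tB)
    (κ : ℝ → ℝ) (nuh : Fin q → Fin q → ℝ)
    (Cl : ∀ nA nB : ℕ, Strategy q m nA nB → Prop) : Prop :=
  ∀ ε : ℝ, 0 ≤ ε → ∀ (nA nB : ℕ) (S : Strategy q m nA nB), Cl nA nB S →
    qval G - ε ≤ winProb G S → LocalDilation S T (κ ε) nuh

def gamePoly {q m nA nB : ℕ} (G : Game q m) (S : Strategy q m nA nB) :
    Matrix (Fin nA × Fin nB) (Fin nA × Fin nB) ℂ :=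
  ∑ x, ∑ y, ∑ a, ∑ b,
    (((G.nu x y : ℝ) : ℂ) * (if G.D a b x y then 1 else 0)) • (S.A x a ⊗ₖ S.B y b)

def specGap {I : Type*} [Fintype I] [DecidableEq I] (M : Matrix I I ℂ) : ℝ :=
  if h : M.IsHermitian then
    (((Finset.univ.val.map h.eigenvalues).sort (· ≤ ·)).getD (Fintype.card I - 1) 0) -
    (((Finset.univ.val.map h.eigenvalues).sort (· ≤ ·)).getD (Fintype.card I - 2) 0)
  else 0

def rhoA {nA nB : ℕ} (psi : Fin nA × Fin nB → ℂ) : Op nA :=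
  Matrix.of fun i j => ∑ k, psi (i, k) * star (psi (j, k))

def rhoB {nA nB : ℕ} (psi : Fin nA × Fin nB → ℂ) : Op nB :=
  Matrix.of fun i j => ∑ k, psi (k, i) * star (psi (k, j))

def IsMaxEntG {I J : Type*} [Fintype I] [DecidableEq I] [Fintype J] (psi : I × J → ℂ) : Prop :=
  Fintype.card I = Fintype.card J ∧
  ∃ (e : I → I → ℂ) (f : I → J → ℂ),
    (∀ i j, inn (e i) (e j) = if i = j then 1 else 0) ∧
    (∀ i j, inn (f i) (f j) = if i = j then 1 else 0) ∧
    ∀ p, psi p = ((Real.sqrt (Fintype.card I))⁻¹ : ℂ) * ∑ i, e i p.1 * f i p.2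

def IsMaxEntIn {kA kB : ℕ} (v : Fin kA × Fin kB → ℂ) : Prop :=
  ∃ (d : ℕ), 0 < d ∧ ∃ (e : Fin d → Fin kA → ℂ) (f : Fin d → Fin kB → ℂ),
    (∀ i j, inn (e i) (e j) = if i = j then 1 else 0) ∧
    (∀ i j, inn (f i) (f j) = if i = j then 1 else 0) ∧
    ∀ p, v p = ((Real.sqrt d)⁻¹ : ℂ) * ∑ i, e i p.1 * f i p.2

def hsNorm {n : ℕ} (M : Op n) : ℝ := Real.sqrt (Mᴴ * M).trace.re

/-- The square root `Matrix.PosSemidef.sqrt` of the older Mathlib, with its old definition. -/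
def posSemidefSqrtOld {n : ℕ} {M : Op n} (hA : M.PosSemidef) : Op n :=
  (hA.1.eigenvectorUnitary : Op n) * diagonal ((↑) ∘ (√·) ∘ hA.1.eigenvalues) *
    (star hA.1.eigenvectorUnitary : Op n)

def traceNorm {n : ℕ} (M : Op n) : ℝ :=
  (posSemidefSqrtOld (Matrix.posSemidef_conjTranspose_mul_self M)).trace.re


namespace Stmt8Aux

lemma trace_inner {n : ℕ} (P Q : Op n) :
    (Pᴴ * Q).trace = ∑ i, ∑ j, star (P i j) * Q i j := by
  simp only [Matrix.trace, Matrix.diag, Matrix.mul_apply, Matrix.conjTranspose_apply]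
  exact Finset.sum_comm

lemma sum_comm3 {M : Type*} [AddCommMonoid M] {α β γ : Type*} [Fintype α] [Fintype β] [Fintype γ]
    (f : α → β → γ → M) :
    ∑ i, ∑ k, ∑ l, f i k l = ∑ l, ∑ k, ∑ i, f i k l := by
  calc ∑ i, ∑ k, ∑ l, f i k l = ∑ i, ∑ l, ∑ k, f i k l :=
        Finset.sum_congr rfl fun i _ => Finset.sum_comm
    _ = ∑ l, ∑ i, ∑ k, f i k l := Finset.sum_comm
    _ = ∑ l, ∑ k, ∑ i, f i k l := Finset.sum_congr rfl fun l _ => Finset.sum_comm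

/-- the matrix of amplitudes of a bipartite state -/
def Mpsi {nA nB : ℕ} (psi : Fin nA × Fin nB → ℂ) : Matrix (Fin nA) (Fin nB) ℂ :=
  Matrix.of fun i k => psi (i, k)

lemma rhoA_eq {nA nB : ℕ} (psi : Fin nA × Fin nB → ℂ) :
    rhoA psi = Mpsi psi * (Mpsi psi)ᴴ := by
  ext i j; simp [rhoA, Mpsi, Matrix.mul_apply, Matrix.conjTranspose_apply]

lemma rhoB_transpose {nA nB : ℕ} (psi : Fin nA × Fin nB → ℂ) :
    (rhoB psi)ᵀ = (Mpsi psi)ᴴ * Mpsi psi := by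
  ext i j
  simp [rhoB, Mpsi, Matrix.mul_apply, Matrix.conjTranspose_apply, mul_comm]

lemma trace_rhoA {nA nB : ℕ} (psi : Fin nA × Fin nB → ℂ) :
    (rhoA psi).trace = inn psi psi := by
  simp [rhoA, Matrix.trace, Matrix.diag, inn, Fintype.sum_prod_type, mul_comm]

lemma trace_rhoB {nA nB : ℕ} (psi : Fin nA × Fin nB → ℂ) :
    (rhoB psi).trace = inn psi psi := by
  rw [inn, Fintype.sum_prod_type]
  rw [Finset.sum_comm]
  simp [rhoB, Matrix.trace, Matrix.diag, mul_comm]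

lemma corr_eq {nA nB : ℕ} (psi : Fin nA × Fin nB → ℂ) (A : Op nA) (B : Op nB) :
    inn psi ((A ⊗ₖ B).mulVec psi) = ((Mpsi psi)ᴴ * A * Mpsi psi * Bᵀ).trace := by
  simp only [inn, Matrix.mulVec, dotProduct, Matrix.trace, Matrix.diag,
    Matrix.mul_apply, Matrix.kroneckerMap_apply, Matrix.conjTranspose_apply,
    Matrix.transpose_apply, Fintype.sum_prod_type, Finset.mul_sum, Finset.sum_mul, Mpsi,
    Matrix.of_apply]
  rw [Finset.sum_comm]
  refine Finset.sum_congr rfl fun j _ => ?_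
  rw [sum_comm3]
  refine Finset.sum_congr rfl fun l _ => Finset.sum_congr rfl fun k _ =>
    Finset.sum_congr rfl fun i _ => ?_
  ring

lemma conjT_transpose {m n : ℕ} (B : Matrix (Fin m) (Fin n) ℂ) : (Bᵀ)ᴴ = (Bᴴ)ᵀ := by
  ext i j
  simp [Matrix.conjTranspose_apply, Matrix.transpose_apply]

/-- functional calculus for a hermitian matrix -/
def fc {n : ℕ} (s : Op n) (hs : s.IsHermitian) (f : ℝ → ℝ) : Op n :=
  (hs.eigenvectorUnitary : Op n) * Matrix.diagonal (fun i => (f (hs.eigenvalues i) : ℂ)) *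
    (star (hs.eigenvectorUnitary : Op n))

lemma fc_mul {n : ℕ} (s : Op n) (hs : s.IsHermitian) (f g : ℝ → ℝ) :
    fc s hs f * fc s hs g = fc s hs (fun x => f x * g x) := by
  have hU : (star (hs.eigenvectorUnitary : Op n)) * (hs.eigenvectorUnitary : Op n) = 1 :=
    (Matrix.mem_unitaryGroup_iff').mp (hs.eigenvectorUnitary).2
  simp only [fc, Matrix.mul_assoc]
  rw [← Matrix.mul_assoc (star _) _ , hU, Matrix.one_mul,
    ← Matrix.mul_assoc (Matrix.diagonal _), Matrix.diagonal_mul_diagonal]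
  push_cast
  ring_nf

lemma fc_herm {n : ℕ} (s : Op n) (hs : s.IsHermitian) (f : ℝ → ℝ) :
    (fc s hs f)ᴴ = fc s hs f := by
  unfold fc
  have hst : star (fun i => (f (hs.eigenvalues i) : ℂ)) = fun i => (f (hs.eigenvalues i) : ℂ) := by
    funext i; simp [Complex.star_def, Complex.conj_ofReal]
  simp [Matrix.star_eq_conjTranspose, Matrix.conjTranspose_mul,
    Matrix.diagonal_conjTranspose, hst, Matrix.mul_assoc]

lemma fc_id {n : ℕ} (s : Op n) (hs : s.IsHermitian) : fc s hs (fun x => x) = s := by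
  simpa [fc, Function.comp_def] using hs.spectral_theorem.symm

lemma fc_congr {n : ℕ} (s : Op n) (hs : s.IsHermitian) (f g : ℝ → ℝ)
    (h : ∀ i, f (hs.eigenvalues i) = g (hs.eigenvalues i)) : fc s hs f = fc s hs g := by
  have : (fun i => (f (hs.eigenvalues i) : ℂ)) = fun i => (g (hs.eigenvalues i) : ℂ) :=
    funext fun i => by rw [h i]
  unfold fc
  rw [this]

lemma fc_posSemidef {n : ℕ} (s : Op n) (hs : s.IsHermitian) (f : ℝ → ℝ)
    (hf : ∀ x, 0 ≤ f x) : (fc s hs f).PosSemidef := by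
  have : (Matrix.diagonal (fun i => (f (hs.eigenvalues i) : ℂ))).PosSemidef := by
    refine Matrix.PosSemidef.diagonal fun i => ?_
    simpa using Complex.zero_le_real.mpr (hf _)
  simpa [fc, Matrix.star_eq_conjTranspose, Matrix.mul_assoc] using
    this.mul_mul_conjTranspose_same (hs.eigenvectorUnitary : Op n)

/-- pseudo-inverse function -/
def pinv (x : ℝ) : ℝ := if x ≤ 0 then 0 else x⁻¹

lemma pinv_nonneg : ∀ x, 0 ≤ pinv x := fun x => by
  unfold pinv
  split
  · exact le_refl 0
  · exact inv_nonneg.mpr (le_of_not_ge (by assumption))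

lemma pseudo_facts {n : ℕ} (s : Op n) (hs : s.PosSemidef) :
    ∃ r g : Op n, r * r = s ∧ rᴴ = r ∧ gᴴ = g ∧ g.PosSemidef ∧
      s * g * s = s ∧ g * s * g = g ∧ g * s = s * g := by
  have hs_id : fc s hs.1 (fun x => x) = s := fc_id s hs.1
  have key := fc_mul s hs.1
  have evnn := hs.eigenvalues_nonneg
  refine ⟨fc s hs.1 Real.sqrt, fc s hs.1 pinv, ?_, fc_herm s hs.1 _, fc_herm s hs.1 _,
    fc_posSemidef s hs.1 _ pinv_nonneg, ?_, ?_, ?_⟩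
  · rw [key]
    rw [fc_congr s hs.1 _ (fun x => x) (fun i => Real.mul_self_sqrt (evnn i))]
    exact hs_id
  · calc s * fc s hs.1 pinv * s
        = fc s hs.1 (fun x => x) * fc s hs.1 pinv * fc s hs.1 (fun x => x) := by rw [hs_id]
      _ = fc s hs.1 (fun x => x * pinv x * x) := by rw [key, key]
      _ = fc s hs.1 (fun x => x) := by
          refine fc_congr s hs.1 _ _ fun i => ?_
          have h := evnn i
          unfold pinv
          rcases eq_or_lt_of_le h with h0 | h0
          · simp [← h0]
          · rw [if_neg (not_le.mpr h0)]
            field_simp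
      _ = s := hs_id
  · calc fc s hs.1 pinv * s * fc s hs.1 pinv
        = fc s hs.1 pinv * fc s hs.1 (fun x => x) * fc s hs.1 pinv := by rw [hs_id]
      _ = fc s hs.1 (fun x => pinv x * x * pinv x) := by rw [key, key]
      _ = fc s hs.1 pinv := by
          refine fc_congr s hs.1 _ _ fun i => ?_
          have h := evnn i
          unfold pinv
          rcases eq_or_lt_of_le h with h0 | h0
          · simp [← h0]
          · rw [if_neg (not_le.mpr h0)]
            field_simp
  · calc fc s hs.1 pinv * s = fc s hs.1 pinv * fc s hs.1 (fun x => x) := by rw [hs_id]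
      _ = fc s hs.1 (fun x => pinv x * x) := by rw [key]
      _ = fc s hs.1 (fun x => x * pinv x) := fc_congr s hs.1 _ _ fun i => mul_comm _ _
      _ = fc s hs.1 (fun x => x) * fc s hs.1 pinv := by rw [key]
      _ = s * fc s hs.1 pinv := by rw [hs_id]

lemma sgM_eq {n p : ℕ} {s g : Op n} (hs : sᴴ = s) (hg : gᴴ = g) (hsgs : s * g * s = s)
    {M : Matrix (Fin n) (Fin p) ℂ} (hMM : M * Mᴴ = s * s) : s * (g * M) = M := by
  have hss : (s * s) * (g * s) = s * s := by
    rw [Matrix.mul_assoc s s (g * s), ← Matrix.mul_assoc s g s, hsgs]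
  have hX : (s * g * M) * Mᴴ = s * s := by
    calc s * g * M * Mᴴ = (s * g) * (M * Mᴴ) := by simp only [Matrix.mul_assoc]
      _ = (s * g) * (s * s) := by rw [hMM]
      _ = ((s * g) * s) * s := by simp only [Matrix.mul_assoc]
      _ = s * s := by rw [hsgs]
  have hXh : (s * g * M)ᴴ = Mᴴ * (g * s) := by
    rw [Matrix.conjTranspose_mul, Matrix.conjTranspose_mul, hs, hg]
  have hX2 : (s * g * M) * (s * g * M)ᴴ = s * s := by
    rw [hXh, ← Matrix.mul_assoc, hX, hss]
  have hX3 : M * (s * g * M)ᴴ = s * s := by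
    rw [hXh, ← Matrix.mul_assoc, hMM, hss]
  have key : (s * g * M - M) * (s * g * M - M)ᴴ = 0 := by
    rw [Matrix.conjTranspose_sub, Matrix.sub_mul, Matrix.mul_sub, Matrix.mul_sub,
      hX2, hX, hX3, hMM]
    simp
  have h0 : s * g * M - M = 0 := Matrix.self_mul_conjTranspose_eq_zero.mp key
  rw [← Matrix.mul_assoc]
  exact sub_eq_zero.mp h0

lemma psd_trace_re_nonneg {n : ℕ} {P : Op n} (hP : P.PosSemidef) : 0 ≤ P.trace.re := by
  have h : ∀ i, 0 ≤ (P i i).re := by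
    intro i
    have := hP.dotProduct_mulVec_nonneg (Pi.single i 1)
    rw [Complex.le_def] at this
    simpa [Matrix.mulVec_single, dotProduct, Pi.single_apply] using this.1
  simpa [Matrix.trace, Matrix.diag, Complex.re_sum] using Finset.sum_nonneg fun i _ => h i

lemma psd_trace_mul_re_nonneg {n : ℕ} {P Q : Op n} (hP : P.PosSemidef) (hQ : Q.PosSemidef) :
    0 ≤ (P * Q).trace.re := by
  obtain ⟨v, _, hvv, hvh, _⟩ := pseudo_facts Q hQ
  have h1 : P * Q = P * v * v := by rw [Matrix.mul_assoc, hvv]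
  have h2 : (P * v * v).trace = (v * P * v).trace := by
    rw [Matrix.trace_mul_comm, ← Matrix.mul_assoc]
  have h3 : (v * P * v).PosSemidef := by
    have := hP.conjTranspose_mul_mul_same v
    rwa [hvh] at this
  rw [h1, h2]
  exact psd_trace_re_nonneg h3

lemma psd_sum {n m : ℕ} (f : Fin m → Op n) (hf : ∀ a, (f a).PosSemidef)
    (s : Finset (Fin m)) : (∑ a ∈ s, f a).PosSemidef := by
  classical
  induction s using Finset.induction with
  | empty => simpa using Matrix.PosSemidef.zero
  | insert _ _ hx ih => rw [Finset.sum_insert hx]; exact (hf _).add ih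

lemma povm_bound {n m : ℕ} (A : Fin m → Op n) (hpsd : ∀ a, (A a).PosSemidef)
    (hone : (∑ a, A a) = 1) (s : Op n) (hs : s.PosSemidef) :
    ∑ a, ((A a * s * A a * s).trace).re ≤ ((s * s).trace).re := by
  obtain ⟨v, _, hvv, hvh, _⟩ := pseudo_facts s hs
  have hP : ∀ a, (v * A a * v).PosSemidef := by
    intro a
    have := (hpsd a).conjTranspose_mul_mul_same v
    rwa [hvh] at this
  have hone' : ∀ a, (1 - A a).PosSemidef := by
    intro a
    have : (1 : Op n) - A a = ∑ b ∈ Finset.univ.erase a, A b := by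
      rw [← hone, Finset.sum_erase_eq_sub (Finset.mem_univ a)]
    rw [this]
    exact psd_sum A hpsd _
  have h1 : ∀ a, (A a * s * A a * s).trace = ((v * A a * v) * (v * A a * v)).trace := by
    intro a
    conv_lhs => rw [← hvv]
    rw [show A a * (v * v) * A a * (v * v) = (A a * (v * v) * A a * v) * v by noncomm_ring]
    rw [Matrix.trace_mul_comm]
    congr 1
    noncomm_ring
  have h2 : ∀ a, ((v * A a * v) * (v * A a * v)).trace.re ≤ ((v * A a * v) * s).trace.re := by
    intro a
    have hQ : (v * (1 - A a) * v).PosSemidef := by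
      have := (hone' a).conjTranspose_mul_mul_same v
      rwa [hvh] at this
    have hnn := psd_trace_mul_re_nonneg (hP a) hQ
    have e : v * (1 - A a) * v = s - v * A a * v := by rw [← hvv]; noncomm_ring
    rw [e, Matrix.mul_sub, Matrix.trace_sub, Complex.sub_re] at hnn
    linarith
  have h3 : ∑ a, ((v * A a * v) * s).trace = (s * s).trace := by
    rw [← Matrix.trace_sum]
    congr 1
    have e : ∑ a, (v * A a * v) * s = v * (∑ a, A a) * v * s := by
      simp only [Finset.sum_mul, Finset.mul_sum]
    rw [e, hone, Matrix.mul_one, hvv]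
  calc ∑ a, ((A a * s * A a * s).trace).re
      = ∑ a, (((v * A a * v) * (v * A a * v)).trace).re := by
        exact Finset.sum_congr rfl fun a _ => by rw [h1]
    _ ≤ ∑ a, (((v * A a * v) * s).trace).re := Finset.sum_le_sum fun a _ => h2 a
    _ = ((s * s).trace).re := by rw [← Complex.re_sum, ← Matrix.trace_sum]
                                 rw [← Matrix.trace_sum] at h3
                                 rw [h3]

lemma cs_weighted {ι : Type*} [Fintype ι] (w : ι → ℝ) (hw : ∀ i, 0 ≤ w i) (f g : ι → ℂ) :
    ((∑ i, w i * (star (f i) * g i).re) ≤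
      Real.sqrt (∑ i, w i * (star (f i) * f i).re) *
        Real.sqrt (∑ i, w i * (star (g i) * g i).re)) ∧
    2 * (∑ i, w i * (star (f i) * g i).re) ≤
      (∑ i, w i * (star (f i) * f i).re) + (∑ i, w i * (star (g i) * g i).re) := by
  have habs : ∀ z : ℂ, (star z * z).re = ‖z‖ ^ 2 := fun z => by
    rw [Complex.star_def, mul_comm, Complex.mul_conj]
    simp [Complex.normSq_eq_norm_sq, ← Complex.ofReal_pow]
  have hre : ∀ a b : ℂ, (star a * b).re ≤ ‖a‖ * ‖b‖ := fun a b => by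
    refine le_trans (Complex.re_le_norm _) ?_
    have : ‖star a * b‖ = ‖a‖ * ‖b‖ := by
      simp
    rw [this]
  set F : ι → ℝ := fun i => Real.sqrt (w i) * ‖f i‖ with hF
  set G : ι → ℝ := fun i => Real.sqrt (w i) * ‖g i‖ with hG
  have hFsq : ∀ i, F i ^ 2 = w i * (star (f i) * f i).re := fun i => by
    rw [habs, hF]; rw [mul_pow, Real.sq_sqrt (hw i)]
  have hGsq : ∀ i, G i ^ 2 = w i * (star (g i) * g i).re := fun i => by
    rw [habs, hG]; rw [mul_pow, Real.sq_sqrt (hw i)]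
  have hFG : ∀ i, w i * (star (f i) * g i).re ≤ F i * G i := fun i => by
    have : F i * G i = w i * (‖f i‖ * ‖g i‖) := by
      rw [hF, hG]
      rw [show Real.sqrt (w i) * ‖f i‖ * (Real.sqrt (w i) * ‖g i‖)
        = (Real.sqrt (w i) * Real.sqrt (w i)) * (‖f i‖ * ‖g i‖) by ring,
        Real.mul_self_sqrt (hw i)]
    rw [this]
    exact mul_le_mul_of_nonneg_left (hre _ _) (hw i)
  constructor
  · calc ∑ i, w i * (star (f i) * g i).re ≤ ∑ i, F i * G i :=
        Finset.sum_le_sum fun i _ => hFG i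
      _ ≤ Real.sqrt (∑ i, F i ^ 2) * Real.sqrt (∑ i, G i ^ 2) := by
        rw [← Real.sqrt_mul (Finset.sum_nonneg fun i _ => sq_nonneg _)]
        have hnn : 0 ≤ ∑ i, F i * G i := Finset.sum_nonneg fun i _ =>
          mul_nonneg (mul_nonneg (Real.sqrt_nonneg _) (norm_nonneg _))
            (mul_nonneg (Real.sqrt_nonneg _) (norm_nonneg _))
        have hyy : 0 ≤ (∑ i, F i ^ 2) * ∑ i, G i ^ 2 :=
          mul_nonneg (Finset.sum_nonneg fun i _ => sq_nonneg _)
            (Finset.sum_nonneg fun i _ => sq_nonneg _)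
        exact (Real.le_sqrt hnn hyy).mpr (Finset.sum_mul_sq_le_sq_mul_sq _ _ _)
      _ = Real.sqrt (∑ i, w i * (star (f i) * f i).re) *
            Real.sqrt (∑ i, w i * (star (g i) * g i).re) := by
        rw [show (∑ i, F i ^ 2) = ∑ i, w i * (star (f i) * f i).re from
            Finset.sum_congr rfl fun i _ => hFsq i,
          show (∑ i, G i ^ 2) = ∑ i, w i * (star (g i) * g i).re from
            Finset.sum_congr rfl fun i _ => hGsq i]
  · have h2 : ∀ i, 2 * (w i * (star (f i) * g i).re) ≤ F i ^ 2 + G i ^ 2 := fun i => by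
      have := hFG i
      nlinarith [sq_nonneg (F i - G i)]
    calc 2 * ∑ i, w i * (star (f i) * g i).re = ∑ i, 2 * (w i * (star (f i) * g i).re) := by
          rw [Finset.mul_sum]
      _ ≤ ∑ i, (F i ^ 2 + G i ^ 2) := Finset.sum_le_sum fun i _ => h2 i
      _ = (∑ i, w i * (star (f i) * f i).re) + (∑ i, w i * (star (g i) * g i).re) := by
        rw [Finset.sum_add_distrib,
          show (∑ i, F i ^ 2) = ∑ i, w i * (star (f i) * f i).re from
            Finset.sum_congr rfl fun i _ => hFsq i,
          show (∑ i, G i ^ 2) = ∑ i, w i * (star (g i) * g i).re from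
            Finset.sum_congr rfl fun i _ => hGsq i]

lemma expand_sum {q m n : ℕ} (nu : Fin q → ℝ) (X Y : Fin q → Fin m → Op n) :
    ∑ p : (Fin q × Fin m) × (Fin n × Fin n),
      nu p.1.1 * (star (X p.1.1 p.1.2 p.2.1 p.2.2) * Y p.1.1 p.1.2 p.2.1 p.2.2).re
    = ∑ x, nu x * ∑ a, (((X x a)ᴴ * Y x a).trace).re := by
  simp only [Fintype.sum_prod_type, trace_inner, Complex.re_sum, Finset.mul_sum]

lemma cs_nested {q m n : ℕ} (nu : Fin q → ℝ) (hnn : ∀ x, 0 ≤ nu x)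
    (X Y : Fin q → Fin m → Op n) :
    ((∑ x, nu x * ∑ a, (((X x a)ᴴ * Y x a).trace).re) ≤
      Real.sqrt (∑ x, nu x * ∑ a, (((X x a)ᴴ * X x a).trace).re) *
      Real.sqrt (∑ x, nu x * ∑ a, (((Y x a)ᴴ * Y x a).trace).re)) ∧
    2 * (∑ x, nu x * ∑ a, (((X x a)ᴴ * Y x a).trace).re) ≤
      (∑ x, nu x * ∑ a, (((X x a)ᴴ * X x a).trace).re) +
      (∑ x, nu x * ∑ a, (((Y x a)ᴴ * Y x a).trace).re) := by
  have h := cs_weighted (ι := (Fin q × Fin m) × (Fin n × Fin n)) (fun p => nu p.1.1)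
    (fun p => hnn p.1.1) (fun p => X p.1.1 p.1.2 p.2.1 p.2.2)
    (fun p => Y p.1.1 p.1.2 p.2.1 p.2.2)
  rw [← expand_sum nu X Y, ← expand_sum nu X X, ← expand_sum nu Y Y]
  exact h

end Stmt8Aux

/-- asynchronicity of a strategy versus the asynchronicities of
its associated symmetric strategies (computed via Ando's formula). -/
theorem stmt8 {q m nA nB : ℕ} (S : Strategy q m nA nB)
    (nu : Fin q → ℝ) (hnn : ∀ x, 0 ≤ nu x) (hsum : (∑ x, nu x) = 1)
    (sA : Op nA) (hsA : sA.PosSemidef) (hsA2 : sA * sA = rhoA S.psi)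
    (sB : Op nB) (hsB : sB.PosSemidef) (hsB2 : sB * sB = rhoB S.psi)
    (dA dB : ℝ)
    (hdA : dA = 1 - ∑ x, nu x * ∑ a, ((S.A x a * sA * S.A x a * sA).trace).re)
    (hdB : dB = 1 - ∑ x, nu x * ∑ a, ((S.B x a * sB * S.B x a * sB).trace).re) :
    1 - S.dsync nu ≤ Real.sqrt (1 - dA) * Real.sqrt (1 - dB) ∧
    dA ≤ 2 * S.dsync nu ∧ dB ≤ 2 * S.dsync nu := by
  classical
  have hApsd : ∀ x a, (S.A x a).PosSemidef := fun x a => (S.A_povm x).1 a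
  have hAone : ∀ x, (∑ a, S.A x a) = 1 := fun x => (S.A_povm x).2
  have hBpsd : ∀ x a, (S.B x a).PosSemidef := fun x a => (S.B_povm x).1 a
  have hBone : ∀ x, (∑ a, S.B x a) = 1 := fun x => (S.B_povm x).2
  have hAh : ∀ x a, (S.A x a)ᴴ = S.A x a := fun x a => (hApsd x a).1.eq
  have hBh : ∀ x a, (S.B x a)ᴴ = S.B x a := fun x a => (hBpsd x a).1.eq
  have hsAh : sAᴴ = sA := hsA.1.eq
  set M : Matrix (Fin nA) (Fin nB) ℂ := Stmt8Aux.Mpsi S.psi with hMdef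
  have hMM : M * Mᴴ = sA * sA := by rw [hMdef, ← Stmt8Aux.rhoA_eq, ← hsA2]
  have hMM' : Mᴴ * M = sBᵀ * sBᵀ := by
    rw [hMdef, ← Stmt8Aux.rhoB_transpose, ← hsB2, Matrix.transpose_mul]
  obtain ⟨r, g, hrr, hrh, hgh, hgpsd, hsgs, hgsg, hgs_comm⟩ := Stmt8Aux.pseudo_facts sA hsA
  have hsgM : sA * (g * M) = M := Stmt8Aux.sgM_eq hsAh hgh hsgs hMM
  set W : Matrix (Fin nA) (Fin nB) ℂ := g * M with hWdef
  have hWh : Wᴴ = Mᴴ * g := by rw [hWdef, Matrix.conjTranspose_mul, hgh]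
  have hsW : sA * W = M := by rw [hWdef]; exact hsgM
  have hWs : Wᴴ * sA = Mᴴ := by
    have := congrArg Matrix.conjTranspose hsW
    rwa [Matrix.conjTranspose_mul, hsAh] at this
  have hWM : Wᴴ * M = Mᴴ * W := by rw [hWh, hWdef, Matrix.mul_assoc]
  have hupsd : (Mᴴ * W).PosSemidef := by
    have := hgpsd.conjTranspose_mul_mul_same M
    rwa [Matrix.mul_assoc, ← hWdef] at this
  have h5 : W * Mᴴ * W = M := by
    calc W * Mᴴ * W = g * (M * Mᴴ) * W := by rw [hWdef]; simp only [Matrix.mul_assoc]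
      _ = g * (sA * sA) * W := by rw [hMM]
      _ = (g * sA) * (sA * W) := by simp only [Matrix.mul_assoc]
      _ = (sA * g) * M := by rw [hgs_comm, hsW]
      _ = M := by rw [Matrix.mul_assoc]; exact hsgM
  have huu : (Mᴴ * W) * (Mᴴ * W) = Mᴴ * M := by
    calc (Mᴴ * W) * (Mᴴ * W) = Mᴴ * (W * Mᴴ * W) := by simp only [Matrix.mul_assoc]
      _ = Mᴴ * M := by rw [h5]
  have hueq : Mᴴ * W = sBᵀ :=
    (open scoped MatrixOrder in (CFC.sq_eq_sq_iff _ _ hupsd.nonneg hsB.transpose.nonneg).mp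
      (by rw [pow_two, pow_two, huu, hMM']))
  -- the matrices of the symmetric strategies
  set X : Fin q → Fin m → Op nA := fun x a => r * S.A x a * r with hXdef
  set Y : Fin q → Fin m → Op nA :=
    fun x a => r * (W * ((S.B x a)ᵀ * (Wᴴ * r))) with hYdef
  have hXh : ∀ x a, (X x a)ᴴ = X x a := fun x a => by
    rw [hXdef]
    simp only [Matrix.conjTranspose_mul, hrh, hAh x a, Matrix.mul_assoc]
  have hBth : ∀ x a, ((S.B x a)ᵀ)ᴴ = (S.B x a)ᵀ := fun x a => by
    rw [Stmt8Aux.conjT_transpose, hBh x a]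
  have hYh : ∀ x a, (Y x a)ᴴ = Y x a := fun x a => by
    rw [hYdef]
    simp only [Matrix.conjTranspose_mul, Matrix.conjTranspose_conjTranspose, hrh,
      hBth x a, Matrix.mul_assoc]
  -- trace identity (a)
  have Ia : ∀ x a, ((X x a)ᴴ * Y x a).trace = (Mᴴ * S.A x a * M * (S.B x a)ᵀ).trace := by
    intro x a
    rw [hXh]
    have e1 : X x a * Y x a = r * (S.A x a * (M * ((S.B x a)ᵀ * (Wᴴ * r)))) := by
      rw [hXdef, hYdef]
      simp only [Matrix.mul_assoc]
      rw [← Matrix.mul_assoc r r, hrr, ← Matrix.mul_assoc sA W, hsW]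
    rw [e1, Matrix.trace_mul_comm]
    have e2 : (S.A x a * (M * ((S.B x a)ᵀ * (Wᴴ * r)))) * r
        = S.A x a * (M * ((S.B x a)ᵀ * Mᴴ)) := by
      simp only [Matrix.mul_assoc]
      rw [hrr, hWs]
    rw [e2]
    conv_rhs => rw [show Mᴴ * S.A x a * M * (S.B x a)ᵀ
        = Mᴴ * (S.A x a * (M * (S.B x a)ᵀ)) from by
      simp only [Matrix.mul_assoc], Matrix.trace_mul_comm]
    congr 1
    simp only [Matrix.mul_assoc]
  -- trace identity (b)
  have Ib : ∀ x a, ((X x a)ᴴ * X x a).trace = (S.A x a * sA * S.A x a * sA).trace := by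
    intro x a
    rw [hXh]
    rw [show X x a * X x a = r * (S.A x a * (sA * (S.A x a * r))) from by
      rw [hXdef, ← hrr]; noncomm_ring]
    rw [Matrix.trace_mul_comm]
    rw [← hrr]
    noncomm_ring
  -- trace identity (c)
  have Ic : ∀ x a, ((Y x a)ᴴ * Y x a).trace = (S.B x a * sB * S.B x a * sB).trace := by
    intro x a
    rw [hYh]
    have e3 : Y x a * Y x a
        = r * (W * ((S.B x a)ᵀ * (sBᵀ * ((S.B x a)ᵀ * (Wᴴ * r))))) := by
      rw [hYdef]
      simp only [Matrix.mul_assoc]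
      rw [← Matrix.mul_assoc r r, hrr, ← Matrix.mul_assoc sA W, hsW,
        ← Matrix.mul_assoc Wᴴ M, hWM, hueq]
    rw [e3, Matrix.trace_mul_comm]
    have e4 : (W * ((S.B x a)ᵀ * (sBᵀ * ((S.B x a)ᵀ * (Wᴴ * r))))) * r
        = W * ((S.B x a)ᵀ * (sBᵀ * ((S.B x a)ᵀ * Mᴴ))) := by
      simp only [Matrix.mul_assoc]
      rw [hrr, hWs]
    rw [e4, Matrix.trace_mul_comm]
    have e5 : ((S.B x a)ᵀ * (sBᵀ * ((S.B x a)ᵀ * Mᴴ))) * W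
        = (S.B x a)ᵀ * (sBᵀ * ((S.B x a)ᵀ * sBᵀ)) := by
      simp only [Matrix.mul_assoc]
      rw [hueq]
    rw [e5]
    rw [show (S.B x a)ᵀ * (sBᵀ * ((S.B x a)ᵀ * sBᵀ))
        = (sB * (S.B x a * (sB * S.B x a)))ᵀ from by
      simp only [Matrix.transpose_mul]
      simp only [Matrix.mul_assoc]]
    rw [Matrix.trace_transpose, Matrix.trace_mul_comm]
    congr 1
    simp only [Matrix.mul_assoc]
  -- sum identities
  have E0 : 1 - S.dsync nu = ∑ x, nu x * ∑ a, (((X x a)ᴴ * Y x a).trace).re := by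
    have hd : S.dsync nu = 1 - ∑ x, nu x * ∑ a, (corrRaw S.psi S.A S.B x x a a).re := rfl
    rw [hd, sub_sub_cancel]
    refine Finset.sum_congr rfl fun x _ => ?_
    congr 1
    refine Finset.sum_congr rfl fun a _ => ?_
    congr 1
    rw [Ia x a]
    rw [show corrRaw S.psi S.A S.B x x a a
        = inn S.psi ((S.A x a ⊗ₖ S.B x a).mulVec S.psi) from rfl,
      Stmt8Aux.corr_eq, ← hMdef]
  have EA : 1 - dA = ∑ x, nu x * ∑ a, (((X x a)ᴴ * X x a).trace).re := by
    rw [hdA, sub_sub_cancel]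
    refine Finset.sum_congr rfl fun x _ => ?_
    congr 1
    refine Finset.sum_congr rfl fun a _ => ?_
    rw [Ib x a]
  have EB : 1 - dB = ∑ x, nu x * ∑ a, (((Y x a)ᴴ * Y x a).trace).re := by
    rw [hdB, sub_sub_cancel]
    refine Finset.sum_congr rfl fun x _ => ?_
    congr 1
    refine Finset.sum_congr rfl fun a _ => ?_
    rw [Ic x a]
  obtain ⟨hcs1, hcs2⟩ := Stmt8Aux.cs_nested nu hnn X Y
  -- nonnegativity of dA and dB
  have hdA0 : 0 ≤ dA := by
    have hx : ∀ x, ∑ a, ((S.A x a * sA * S.A x a * sA).trace).re ≤ 1 := by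
      intro x
      have h := Stmt8Aux.povm_bound (S.A x) (hApsd x) (hAone x) sA hsA
      have h1 : ((sA * sA).trace).re = 1 := by
        rw [hsA2, Stmt8Aux.trace_rhoA, S.psi_unit]
        simp
      linarith
    have hle : ∑ x, nu x * ∑ a, ((S.A x a * sA * S.A x a * sA).trace).re ≤ 1 := by
      calc ∑ x, nu x * ∑ a, ((S.A x a * sA * S.A x a * sA).trace).re
          ≤ ∑ x, nu x * 1 := Finset.sum_le_sum fun x _ =>
            mul_le_mul_of_nonneg_left (hx x) (hnn x)
        _ = 1 := by simp only [mul_one]; exact hsum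
    rw [hdA]; linarith
  have hdB0 : 0 ≤ dB := by
    have hx : ∀ x, ∑ a, ((S.B x a * sB * S.B x a * sB).trace).re ≤ 1 := by
      intro x
      have h := Stmt8Aux.povm_bound (S.B x) (hBpsd x) (hBone x) sB hsB
      have h1 : ((sB * sB).trace).re = 1 := by
        rw [hsB2, Stmt8Aux.trace_rhoB, S.psi_unit]
        simp
      linarith
    have hle : ∑ x, nu x * ∑ a, ((S.B x a * sB * S.B x a * sB).trace).re ≤ 1 := by
      calc ∑ x, nu x * ∑ a, ((S.B x a * sB * S.B x a * sB).trace).re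
          ≤ ∑ x, nu x * 1 := Finset.sum_le_sum fun x _ =>
            mul_le_mul_of_nonneg_left (hx x) (hnn x)
        _ = 1 := by simp only [mul_one]; exact hsum
    rw [hdB]; linarith
  have hkey : 2 * (1 - S.dsync nu) ≤ (1 - dA) + (1 - dB) := by
    rw [E0, EA, EB]; exact hcs2
  refine ⟨?_, ?_, ?_⟩
  · rw [E0, EA, EB]; exact hcs1
  · linarith
  · linarith



end
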